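/- Let X be a set and B a Boolean algebra of subsets of X with the property that any countable family of pairwise disjoint nonempty sets in B whose union lies in B is in fact finite. Then every finitely additive probability measure on B extends uniquely to a countably additive probability measure on the σ-algebra generated by B. -/

import Mathlib

open Set MeasureTheory
open scoped ENNReal

/-- Hahn–Kolmogorov extension, specialized: if `B` is a Boolean algebra of subsets of `X`
in which every countable pairwise-disjoint family of nonempty sets whose union lies in `B`
is finite, then every finitely additive probability measure on `B` extends uniquely to a
countably additive probability measure on the σ-algebra generated by `B`. -/
theorem extend_finitelyAdditive_of_no_infinite_disjoint {X : Type*} (B : Set (Set X))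
    (hempty : ∅ ∈ B) (hcompl : ∀ A ∈ B, Aᶜ ∈ B) (hunion : ∀ A ∈ B, ∀ A' ∈ B, A ∪ A' ∈ B)
    (hfin : ∀ S : Set (Set X), S ⊆ B → S.Countable → S.Pairwise Disjoint →
      (∀ A ∈ S, A.Nonempty) → ⋃₀ S ∈ B → S.Finite)
    (μ₀ : Set X → ℝ) (hnonneg : ∀ A ∈ B, 0 ≤ μ₀ A) (hle : ∀ A ∈ B, μ₀ A ≤ 1)
    (hone : μ₀ Set.univ = 1)
    (hadd : ∀ A ∈ B, ∀ A' ∈ B, Disjoint A A' → μ₀ (A ∪ A') = μ₀ A + μ₀ A') :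
    ∃! μ : @Measure X (MeasurableSpace.generateFrom B),
      (@IsProbabilityMeasure X (MeasurableSpace.generateFrom B) μ ∧
        ∀ A ∈ B, μ A = ENNReal.ofReal (μ₀ A)) := by
  classical
  letI mX : MeasurableSpace X := MeasurableSpace.generateFrom B
  -- basic closure properties of the algebra B
  have huniv : (univ : Set X) ∈ B := by simpa using hcompl ∅ hempty
  have hinter : ∀ A ∈ B, ∀ A' ∈ B, A ∩ A' ∈ B := by
    intro A hA A' hA'
    have := hcompl _ (hunion _ (hcompl A hA) _ (hcompl A' hA'))
    simpa [compl_union] using this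
  have hdiff : ∀ A ∈ B, ∀ A' ∈ B, A \ A' ∈ B := by
    intro A hA A' hA'
    simpa [diff_eq] using hinter A hA A'ᶜ (hcompl A' hA')
  -- μ₀ ∅ = 0
  have h0 : μ₀ ∅ = 0 := by
    have h := hadd ∅ hempty ∅ hempty (disjoint_bot_left)
    simp only [union_empty] at h
    linarith
  -- monotonicity of μ₀ on B
  have hmono : ∀ s ∈ B, ∀ t ∈ B, s ⊆ t → μ₀ s ≤ μ₀ t := by
    intro s hs t ht hst
    have hd : t \ s ∈ B := hdiff t ht s hs
    have hdisj : Disjoint s (t \ s) := disjoint_sdiff_right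
    have h := hadd s hs _ hd hdisj
    rw [union_diff_cancel hst] at h
    have := hnonneg _ hd
    linarith
  -- the ℝ≥0∞-valued set function on B
  set m : ∀ s : Set X, s ∈ B → ℝ≥0∞ := fun s _ => ENNReal.ofReal (μ₀ s) with hm
  have m0 : m ∅ hempty = 0 := by simp [hm, h0]
  -- key countable subadditivity on B
  have key : ∀ s, ∀ hs : s ∈ B, ∀ f : ℕ → Set X, s ⊆ ⋃ i, f i →
      extend m s ≤ ∑' i, extend m (f i) := by
    intro s hs f hcov
    by_cases hall : ∀ i, f i ∈ B
    · -- disjointify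
      set U : ℕ → Set X := fun n => ⋃ i ∈ Finset.range n, f i with hU
      have hUB : ∀ n, U n ∈ B := by
        intro n
        induction n with
        | zero => simpa [hU] using hempty
        | succ n ih =>
          have : U (n + 1) = f n ∪ U n := by
            show (⋃ i ∈ Finset.range (n + 1), f i) = _
            rw [Finset.range_add_one, Finset.set_biUnion_insert]
          rw [this]
          exact hunion _ (hall n) _ ih
      set g : ℕ → Set X := fun i => (f i ∩ s) \ U i with hg
      have hgB : ∀ i, g i ∈ B := fun i =>
        hdiff _ (hinter _ (hall i) _ hs) _ (hUB i)
      have hgf : ∀ i, g i ⊆ f i := fun i x hx => hx.1.1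
      have hgs : ∀ i, g i ⊆ s := fun i x hx => hx.1.2
      have hmemU : ∀ {j n : ℕ}, j < n → f j ⊆ U n := by
        intro j n hjn x hx
        exact mem_biUnion (Finset.mem_range.2 hjn) hx
      have hgdisj : ∀ {i j : ℕ}, i < j → Disjoint (g i) (g j) := by
        intro i j hij
        refine Set.disjoint_left.2 fun x hxi hxj => ?_
        exact hxj.2 (hmemU hij (hgf i hxi))
      have hgpair : Pairwise (Function.onFun Disjoint g) := by
        intro i j hij
        rcases lt_or_gt_of_ne hij with h | h
        · exact hgdisj h
        · exact (hgdisj h).symm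
      have hgunion : ⋃ i, g i = s := by
        apply Set.Subset.antisymm
        · exact iUnion_subset hgs
        · intro x hx
          have hx' : ∃ i, x ∈ f i := mem_iUnion.1 (hcov hx)
          let i := Nat.find hx'
          have hxi : x ∈ f i := Nat.find_spec hx'
          have hxU : x ∉ U i := by
            intro hxU
            rcases mem_iUnion₂.1 hxU with ⟨j, hj, hxj⟩
            exact Nat.find_min hx' (Finset.mem_range.1 hj) hxj
          exact mem_iUnion.2 ⟨i, ⟨⟨hxi, hx⟩, hxU⟩⟩
      -- the family of nonempty pieces is finite
      set S : Set (Set X) := {A | ∃ i, A = g i ∧ A.Nonempty} with hSdef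
      have hSsub : S ⊆ B := by
        rintro A ⟨i, rfl, -⟩
        exact hgB i
      have hScount : S.Countable := by
        apply (Set.countable_range g).mono
        rintro A ⟨i, rfl, -⟩
        exact ⟨i, rfl⟩
      have hSdisj : S.Pairwise Disjoint := by
        rintro A ⟨i, rfl, -⟩ A' ⟨j, rfl, -⟩ hne
        have hij : i ≠ j := fun h => hne (by rw [h])
        exact hgpair hij
      have hSne : ∀ A ∈ S, A.Nonempty := by
        rintro A ⟨i, rfl, hne⟩
        exact hne
      have hSunion : ⋃₀ S = s := by
        apply Set.Subset.antisymm
        · rintro x ⟨A, ⟨i, rfl, -⟩, hx⟩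
          exact hgs i hx
        · intro x hx
          rw [← hgunion] at hx
          rcases mem_iUnion.1 hx with ⟨i, hxi⟩
          exact ⟨g i, ⟨i, rfl, ⟨x, hxi⟩⟩, hxi⟩
      have hSfin : S.Finite := hfin S hSsub hScount hSdisj hSne (hSunion ▸ hs)
      -- hence the nonempty index set is finite, pick a bound N
      have hIfin : {i : ℕ | (g i).Nonempty}.Finite := by
        have hIeq : {i : ℕ | (g i).Nonempty} = g ⁻¹' S := by
          ext i
          constructor
          · intro hi
            exact ⟨i, rfl, hi⟩
          · rintro ⟨j, hji, hne⟩
            exact hne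
        rw [hIeq]
        apply Set.Finite.preimage _ hSfin
        rintro i ⟨j, hji, hnei⟩ k ⟨l, hlk, hnek⟩ hik
        by_contra hne
        have := hgpair hne
        rw [Function.onFun, hik] at this
        rw [hik] at hnei
        exact (hnei.mono (le_inf le_rfl le_rfl)).ne_empty (this.eq_bot)
      obtain ⟨N, hN⟩ : ∃ N : ℕ, ∀ i, N ≤ i → g i = ∅ := by
        rcases hIfin.bddAbove with ⟨b, hb⟩
        refine ⟨b + 1, fun i hi => ?_⟩
        by_contra hne
        have : i ≤ b := hb (Set.nonempty_iff_ne_empty.2 hne)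
        omega
      -- s is the finite disjoint union of the g i, i < N
      have hsEq : s = ⋃ i ∈ Finset.range N, g i := by
        rw [← hgunion]
        apply Set.Subset.antisymm
        · intro x hx
          rcases mem_iUnion.1 hx with ⟨i, hxi⟩
          by_cases hiN : i < N
          · exact mem_biUnion (Finset.mem_range.2 hiN) hxi
          · rw [hN i (by omega)] at hxi
            exact absurd hxi (notMem_empty x)
        · intro x hx
          rcases mem_iUnion₂.1 hx with ⟨i, -, hxi⟩
          exact mem_iUnion.2 ⟨i, hxi⟩
      -- finite additivity over the range
      have hVadd : ∀ n : ℕ, (⋃ i ∈ Finset.range n, g i) ∈ B ∧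
          μ₀ (⋃ i ∈ Finset.range n, g i) = ∑ i ∈ Finset.range n, μ₀ (g i) := by
        intro n
        induction n with
        | zero => simp [hempty, h0]
        | succ n ih =>
          have heq : (⋃ i ∈ Finset.range (n + 1), g i)
              = g n ∪ ⋃ i ∈ Finset.range n, g i := by
            rw [Finset.range_add_one, Finset.set_biUnion_insert]
          have hdisjV : Disjoint (g n) (⋃ i ∈ Finset.range n, g i) := by
            refine Set.disjoint_left.2 fun x hx hx' => ?_
            rcases mem_iUnion₂.1 hx' with ⟨j, hj, hxj⟩
            exact Set.disjoint_left.1 (hgdisj (Finset.mem_range.1 hj)) hxj hx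
          constructor
          · rw [heq]; exact hunion _ (hgB n) _ ih.1
          · rw [heq, hadd _ (hgB n) _ ih.1 hdisjV, ih.2, Finset.sum_range_succ]
            ring
      have hμs : μ₀ s = ∑ i ∈ Finset.range N, μ₀ (g i) := by
        rw [hsEq]; exact (hVadd N).2
      -- conclude
      have hle1 : μ₀ s ≤ ∑ i ∈ Finset.range N, μ₀ (f i) := by
        rw [hμs]
        apply Finset.sum_le_sum
        intro i _
        exact hmono _ (hgB i) _ (hall i) (hgf i)
      calc extend m s = ENNReal.ofReal (μ₀ s) := extend_eq m hs
        _ ≤ ENNReal.ofReal (∑ i ∈ Finset.range N, μ₀ (f i)) :=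
            ENNReal.ofReal_le_ofReal hle1
        _ = ∑ i ∈ Finset.range N, ENNReal.ofReal (μ₀ (f i)) :=
            ENNReal.ofReal_sum_of_nonneg fun i _ => hnonneg _ (hall i)
        _ = ∑ i ∈ Finset.range N, extend m (f i) := by
            refine Finset.sum_congr rfl fun i _ => ?_
            rw [extend_eq m (hall i)]
        _ ≤ ∑' i, extend m (f i) := ENNReal.sum_le_tsum _
    · push_neg at hall
      rcases hall with ⟨i, hi⟩
      have : (∑' i, extend m (f i)) = ⊤ := by
        refine eq_top_iff.2 ?_
        calc (⊤ : ℝ≥0∞) = extend m (f i) := (extend_eq_top m hi).symm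
          _ ≤ ∑' i, extend m (f i) := ENNReal.le_tsum i
      rw [this]
      exact le_top
  -- the induced outer measure
  have hext0 : extend m ∅ = 0 := extend_empty hempty m0
  set μ' : OuterMeasure X := OuterMeasure.ofFunction (extend m) hext0 with hμ'
  have hμ'B : ∀ s ∈ B, μ' s = ENNReal.ofReal (μ₀ s) := by
    intro s hs
    apply le_antisymm
    · exact (OuterMeasure.ofFunction_le s).trans_eq (extend_eq m hs)
    · rw [hμ', OuterMeasure.ofFunction_apply]
      refine le_iInf fun f => le_iInf fun hf => ?_
      have := key s hs f hf
      rwa [extend_eq m hs] at this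
  -- every set in B is Carathéodory measurable
  have hcar : ∀ s ∈ B, MeasurableSet[μ'.caratheodory] s := by
    intro s hs
    apply OuterMeasure.ofFunction_caratheodory
    intro t
    by_cases ht : t ∈ B
    · have h1 : t ∩ s ∈ B := hinter t ht s hs
      have h2 : t \ s ∈ B := hdiff t ht s hs
      rw [extend_eq m h1, extend_eq m h2, extend_eq m ht]
      show ENNReal.ofReal (μ₀ (t ∩ s)) + ENNReal.ofReal (μ₀ (t \ s))
          ≤ ENNReal.ofReal (μ₀ t)
      rw [← ENNReal.ofReal_add (hnonneg _ h1) (hnonneg _ h2)]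
      apply ENNReal.ofReal_le_ofReal
      have hdisj : Disjoint (t ∩ s) (t \ s) :=
        disjoint_sdiff_right.mono_left inter_subset_right
      have h := hadd _ h1 _ h2 hdisj
      rw [Set.inter_union_diff] at h
      linarith
    · rw [extend_eq_top m ht]
      exact le_top
  have h_le : mX ≤ μ'.caratheodory := MeasurableSpace.generateFrom_le hcar
  -- the measure
  set μ : Measure X := μ'.toMeasure h_le with hμdef
  have hμB : ∀ A ∈ B, μ A = ENNReal.ofReal (μ₀ A) := by
    intro A hA
    rw [hμdef, MeasureTheory.toMeasure_apply _ _
      (MeasurableSpace.measurableSet_generateFrom hA)]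
    exact hμ'B A hA
  have hprob : IsProbabilityMeasure μ := by
    constructor
    rw [hμB univ huniv, hone]
    simp
  refine ⟨μ, ⟨hprob, hμB⟩, ?_⟩
  rintro ν ⟨hpν, hνB⟩
  haveI := hpν
  haveI := hprob
  refine MeasureTheory.ext_of_generate_finite B rfl ?_ ?_ ?_
  · intro s hsB t htB _
    exact hinter s hsB t htB
  · intro s hsB
    rw [hνB s hsB, hμB s hsB]
  · rw [measure_univ, measure_univ]
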